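/- arXiv:1905.04048 — 2 statements merged into one kernel-verified Lean document; each statement's English description precedes it below -/
import Mathlib

section
/- Let (a,b,c) ∈ k³ \ {(0,0,0)}. (1) If a ≠ 0 and a+b ≠ 0, then U(a,b,c) is isomorphic as a left Λ-module to M(ω(a,b,c)), where ω(a,b,c) = (a, qb, −(a/(a+b))·c). (2) If a ≠ 0, a+b = 0 and c ≠ 0, then U(a,b,c) is isomorphic as a left Λ-module to M(0,0,1). (3) If a = 0 and b ≠ 0, then U(a,b,c) is isomorphic as a left Λ-module to M(0,1,0). (Since U(a,b,c) is the kernel of the projective cover Λ → M(a,b,c), these isomorphisms compute the syzygy Ω M(a,b,c) ≅ U(a,b,c) in these cases.) -/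
open CategoryTheory Limits Opposite

/-- The algebra `Λ = Λ(q)` of Ringel–Zhang: a `k`-algebra with distinguished elements
`x, y, z` satisfying the defining relations
`x² = y² = z² = 0`, `yz = 0`, `xy + q·yx = 0`, `xz = zx`, `zy = zx`,
and admitting the `k`-basis `{1, x, y, z, yx, zx}`.
Any such algebra is canonically isomorphic to the quotient of the free algebra
`k⟨x,y,z⟩` by the two-sided ideal generated by these relations. -/
structure LambdaAlg (k : Type) [Field k] (q : k) (Λ : Type) [Ring Λ] [Algebra k Λ] :
    Type where
  x : Λ
  y : Λ
  z : Λ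
  hxx : x * x = 0
  hyy : y * y = 0
  hzz : z * z = 0
  hyz : y * z = 0
  hxy : x * y + q • (y * x) = 0
  hxz : x * z - z * x = 0
  hzy : z * y - z * x = 0
  basis : Module.Basis (Fin 6) k Λ
  hb0 : basis 0 = 1
  hb1 : basis 1 = x
  hb2 : basis 2 = y
  hb3 : basis 3 = z
  hb4 : basis 4 = y * x
  hb5 : basis 5 = z * x

namespace LambdaAlg

variable {k : Type} [Field k] {q : k} {Λ : Type} [Ring Λ] [Algebra k Λ]

/-- The element `ax + by + cz` of `Λ`. -/
def w (D : LambdaAlg k q Λ) (a b c : k) : Λ := a • D.x + b • D.y + c • D.z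

/-- The left ideal `U(a,b,c) = Λ(ax+by+cz) + Λ·yx + Λ·zx` of `Λ`. -/
def U (D : LambdaAlg k q Λ) (a b c : k) : Submodule Λ Λ :=
  Submodule.span Λ {D.w a b c, D.y * D.x, D.z * D.x}

/-- The left `Λ`-module `M(a,b,c) = Λ/U(a,b,c)`. -/
abbrev M (D : LambdaAlg k q Λ) (a b c : k) : Type := Λ ⧸ D.U a b c

/-- The right ideal `U′(a,b,c) = (ax+by+cz)Λ + yx·Λ + zx·Λ` of `Λ`,
viewed as a `Λᵐᵒᵖ`-submodule of `Λ`. -/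
def U' (D : LambdaAlg k q Λ) (a b c : k) : Submodule Λᵐᵒᵖ Λ :=
  Submodule.span Λᵐᵒᵖ {D.w a b c, D.y * D.x, D.z * D.x}

/-- The right `Λ`-module `M′(a,b,c) = Λ/U′(a,b,c)` (a module over `Λᵐᵒᵖ`). -/
abbrev M' (D : LambdaAlg k q Λ) (a b c : k) : Type := Λ ⧸ D.U' a b c

/-- The `k`-subspace `{m ∈ M : x·m = y·m = z·m = 0}` of a left `Λ`-module `M`;
since `x, y, z` generate `rad Λ` and every simple `Λ`-module is isomorphic to `k`,
this is the socle of `M`. -/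
def ann (D : LambdaAlg k q Λ) (M : Type) [AddCommGroup M] [Module k M] [Module Λ M]
    [IsScalarTower k Λ M] : Submodule k M where
  carrier := {m | D.x • m = 0 ∧ D.y • m = 0 ∧ D.z • m = 0}
  add_mem' := by
    rintro a b ⟨h1, h2, h3⟩ ⟨g1, g2, g3⟩
    simp [smul_add, h1, h2, h3, g1, g2, g3]
  zero_mem' := by simp
  smul_mem' := by
    rintro a m ⟨h1, h2, h3⟩
    refine ⟨?_, ?_, ?_⟩ <;> rw [smul_comm] <;> simp [h1, h2, h3]

/-- The submodule `(rad Λ)·M = x·M + y·M + z·M` of a left `Λ`-module `M`. -/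
def radM (D : LambdaAlg k q Λ) (M : Type) [AddCommGroup M] [Module Λ M] :
    Submodule Λ M :=
  Submodule.span Λ
    (Set.range (fun m : M => D.x • m) ∪ Set.range (fun m : M => D.y • m) ∪
      Set.range (fun m : M => D.z • m))

end LambdaAlg

/-- A module is indecomposable if it is nonzero and is not the direct sum of two
nonzero submodules. -/
def IsIndecomposable (R : Type) [Ring R] (M : Type) [AddCommGroup M] [Module R M] :
    Prop :=
  Nontrivial M ∧
    ∀ N₁ N₂ : Submodule R M, N₁ ⊓ N₂ = ⊥ → N₁ ⊔ N₂ = ⊤ → N₁ = ⊥ ∨ N₂ = ⊥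

/-- A module is torsionless if it admits an injective linear map into a finite free
module. -/
def IsTorsionless (R : Type) [Ring R] (M : Type) [AddCommGroup M] [Module R M] : Prop :=
  ∃ (n : ℕ) (f : M →ₗ[R] (Fin n → R)), Function.Injective f

/-- The canonical evaluation map `M → M** = Hom_{Λᵒᵖ}(Hom_Λ(M, Λ), Λ)`,
sending `m` to `f ↦ f m`. -/
def evalMap (Λ : Type) [Ring Λ] (M : Type) [AddCommGroup M] [Module Λ M] :
    M → ((M →ₗ[Λ] Λ) →ₗ[Λᵐᵒᵖ] Λ) := fun m =>
  { toFun := fun f => f m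
    map_add' := fun _ _ => rfl
    map_smul' := fun _ _ => rfl }

/-- The transformation `ω′(a,b,c) = (a, q⁻¹b, −((a+q⁻¹b)/a)·c)` on triples. -/
def omegaPrime {k : Type} [Field k] (q : k) (t : k × k × k) : k × k × k :=
  (t.1, q⁻¹ * t.2.1, -((t.1 + q⁻¹ * t.2.1) / t.1) * t.2.2)

namespace LambdaAlg

variable {k : Type} [Field k] {q : k} {Λ : Type} [Ring Λ] [Algebra k Λ]
variable (D : LambdaAlg k q Λ)

lemma xy' : D.x * D.y = -(q • (D.y * D.x)) := eq_neg_of_add_eq_zero_left D.hxy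
lemma xz' : D.x * D.z = D.z * D.x := sub_eq_zero.mp D.hxz
lemma zy' : D.z * D.y = D.z * D.x := sub_eq_zero.mp D.hzy

lemma yx_x : (D.y * D.x) * D.x = 0 := by rw [mul_assoc, D.hxx, mul_zero]
lemma yx_y : (D.y * D.x) * D.y = 0 := by
  rw [mul_assoc, D.xy', mul_neg, mul_smul_comm, ← mul_assoc, D.hyy, zero_mul, smul_zero, neg_zero]
lemma yx_z : (D.y * D.x) * D.z = 0 := by
  rw [mul_assoc, D.xz', ← mul_assoc, D.hyz, zero_mul]
lemma zx_x : (D.z * D.x) * D.x = 0 := by rw [mul_assoc, D.hxx, mul_zero]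
lemma zx_y : (D.z * D.x) * D.y = 0 := by
  rw [mul_assoc, D.xy', mul_neg, mul_smul_comm, ← mul_assoc, D.zy', mul_assoc, D.hxx, mul_zero,
    smul_zero, neg_zero]
lemma zx_z : (D.z * D.x) * D.z = 0 := by
  rw [mul_assoc, D.xz', ← mul_assoc, D.hzz, zero_mul]

lemma x_mul_w (a b c : k) : D.x * D.w a b c = (-(q*b)) • (D.y*D.x) + c • (D.z*D.x) := by
  simp only [w, mul_add, mul_smul_comm, D.hxx, D.xy', D.xz']
  module
lemma y_mul_w (a b c : k) : D.y * D.w a b c = a • (D.y*D.x) := by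
  simp only [w, mul_add, mul_smul_comm, D.hyy, D.hyz]
  module
lemma z_mul_w (a b c : k) : D.z * D.w a b c = (a+b) • (D.z*D.x) := by
  simp only [w, mul_add, mul_smul_comm, D.hzz, D.zy']
  module
lemma yx_mul_w (a b c : k) : (D.y*D.x) * D.w a b c = 0 := by
  simp only [w, mul_add, mul_smul_comm, D.yx_x, D.yx_y, D.yx_z]
  module
lemma zx_mul_w (a b c : k) : (D.z*D.x) * D.w a b c = 0 := by
  simp only [w, mul_add, mul_smul_comm, D.zx_x, D.zx_y, D.zx_z]
  module

lemma w_mul_w (a b c a' b' c' : k) :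
    D.w a' b' c' * D.w a b c = (b'*a - a'*(q*b)) • (D.y*D.x) + (a'*c + c'*(a+b)) • (D.z*D.x) := by
  rw [w, add_mul, add_mul, smul_mul_assoc, smul_mul_assoc, smul_mul_assoc,
    D.x_mul_w, D.y_mul_w, D.z_mul_w]
  module

lemma exists_coeffs (a b c : k) (habc : ¬ (a = 0 ∧ b = 0 ∧ c = 0)) (lam : Λ)
    (hl : lam * D.w a b c = 0) :
    ∃ c1 c2 c3 c4 c5 : k,
      lam = c1 • D.x + c2 • D.y + c3 • D.z + c4 • (D.y*D.x) + c5 • (D.z*D.x)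
      ∧ c2 * a = q * b * c1 ∧ c1 * c + c3 * (a+b) = 0 := by
  set r : Fin 6 → k := fun i => D.basis.repr lam i with hr
  have hsum : lam = r 0 • (1:Λ) + r 1 • D.x + r 2 • D.y + r 3 • D.z + r 4 • (D.y*D.x)
      + r 5 • (D.z*D.x) := by
    have h := D.basis.sum_repr lam
    rw [Fin.sum_univ_six, D.hb0, D.hb1, D.hb2, D.hb3, D.hb4, D.hb5] at h
    exact h.symm
  have hprod : (r 0 * a) • D.x + (r 0 * b) • D.y + (r 0 * c) • D.z
      + (r 2 * a - q * b * r 1) • (D.y*D.x) + (r 1 * c + r 3 * (a+b)) • (D.z*D.x) = 0 := by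
    rw [← hl]
    conv_rhs => rw [hsum]
    rw [add_mul, add_mul, add_mul, add_mul, add_mul, smul_mul_assoc, smul_mul_assoc,
      smul_mul_assoc, smul_mul_assoc, smul_mul_assoc, smul_mul_assoc, one_mul,
      D.x_mul_w, D.y_mul_w, D.z_mul_w, D.yx_mul_w, D.zx_mul_w, w]
    module
  have li := Fintype.linearIndependent_iff.mp D.basis.linearIndependent
  have key := li ![0, r 0 * a, r 0 * b, r 0 * c, r 2 * a - q * b * r 1, r 1 * c + r 3 * (a+b)]
    (by
      rw [Fin.sum_univ_six, D.hb0, D.hb1, D.hb2, D.hb3, D.hb4, D.hb5]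
      simpa using hprod)
  have h0 : r 0 = 0 := by
    have k1 := key 1; have k2 := key 2; have k3 := key 3
    simp only [Matrix.cons_val_one, Matrix.head_cons, Matrix.cons_val_two, Matrix.tail_cons,
      Matrix.cons_val_three, Matrix.cons_val_zero] at k1 k2 k3
    by_contra h0
    exact habc ⟨(mul_eq_zero.mp k1).resolve_left h0, (mul_eq_zero.mp k2).resolve_left h0,
      (mul_eq_zero.mp k3).resolve_left h0⟩
  refine ⟨r 1, r 2, r 3, r 4, r 5, ?_, ?_, ?_⟩
  · rw [hsum, h0, zero_smul, zero_add]
  · have k4 := key 4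
    simp only [Matrix.cons_val_four, Matrix.cons_val_succ, Matrix.head_cons,
      Matrix.tail_cons, Matrix.cons_val_zero, Matrix.cons_val_one] at k4
    exact sub_eq_zero.mp k4
  · have k5 := key 5
    simpa using k5

/-- If `U(a,b,c)` is the cyclic module generated by `w(a,b,c)` and the annihilator of
`w(a,b,c)` is `U(a',b',c')`, then `U(a,b,c) ≅ M(a',b',c')`. -/
noncomputable def isoOf (a b c a' b' c' : k)
    (hU : D.U a b c = Submodule.span Λ {D.w a b c})
    (hker : LinearMap.ker (LinearMap.toSpanSingleton Λ Λ (D.w a b c)) = D.U a' b' c') :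
    ↥(D.U a b c) ≃ₗ[Λ] D.M a' b' c' :=
  (LinearEquiv.ofEq _ _ (hU.trans (LinearMap.span_singleton_eq_range Λ Λ _))).trans
    ((LinearMap.quotKerEquivRange _).symm.trans (Submodule.quotEquivOfEq _ _ hker))

lemma yx_mem_span (a b c : k) (ha : a ≠ 0) :
    D.y * D.x ∈ Submodule.span Λ {D.w a b c} := by
  have h1 := Submodule.smul_mem (Submodule.span Λ {D.w a b c}) D.y
    (Submodule.mem_span_singleton_self _)
  rw [smul_eq_mul, D.y_mul_w] at h1
  have h2 := Submodule.smul_of_tower_mem (Submodule.span Λ {D.w a b c}) a⁻¹ h1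
  rwa [smul_smul, inv_mul_cancel₀ ha, one_smul] at h2

lemma zx_mem_span_of_ab (a b c : k) (hab : a + b ≠ 0) :
    D.z * D.x ∈ Submodule.span Λ {D.w a b c} := by
  have h1 := Submodule.smul_mem (Submodule.span Λ {D.w a b c}) D.z
    (Submodule.mem_span_singleton_self _)
  rw [smul_eq_mul, D.z_mul_w] at h1
  have h2 := Submodule.smul_of_tower_mem (Submodule.span Λ {D.w a b c}) (a+b)⁻¹ h1
  rwa [smul_smul, inv_mul_cancel₀ hab, one_smul] at h2

lemma zx_mem_span_of_c (a b c : k) (hc : c ≠ 0)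
    (hyx : D.y * D.x ∈ Submodule.span Λ {D.w a b c}) :
    D.z * D.x ∈ Submodule.span Λ {D.w a b c} := by
  have h1 := Submodule.smul_mem (Submodule.span Λ {D.w a b c}) D.x
    (Submodule.mem_span_singleton_self _)
  rw [smul_eq_mul, D.x_mul_w] at h1
  have h2 := sub_mem h1 (Submodule.smul_of_tower_mem _ (-(q*b)) hyx)
  rw [add_sub_cancel_left] at h2
  have h3 := Submodule.smul_of_tower_mem (Submodule.span Λ {D.w a b c}) c⁻¹ h2
  rwa [smul_smul, inv_mul_cancel₀ hc, one_smul] at h3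

lemma yx_mem_span_of_qb (a b c : k) (hqb : q * b ≠ 0)
    (hzx : D.z * D.x ∈ Submodule.span Λ {D.w a b c}) :
    D.y * D.x ∈ Submodule.span Λ {D.w a b c} := by
  have h1 := Submodule.smul_mem (Submodule.span Λ {D.w a b c}) D.x
    (Submodule.mem_span_singleton_self _)
  rw [smul_eq_mul, D.x_mul_w] at h1
  have h2 := sub_mem h1 (Submodule.smul_of_tower_mem _ c hzx)
  rw [add_sub_cancel_right] at h2
  have h3 := Submodule.smul_of_tower_mem (Submodule.span Λ {D.w a b c}) (-(q*b))⁻¹ h2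
  rwa [smul_smul, inv_mul_cancel₀ (neg_ne_zero.mpr hqb), one_smul] at h3

lemma U_eq_span (a b c : k) (hyx : D.y * D.x ∈ Submodule.span Λ {D.w a b c})
    (hzx : D.z * D.x ∈ Submodule.span Λ {D.w a b c}) :
    D.U a b c = Submodule.span Λ {D.w a b c} := by
  apply le_antisymm
  · rw [U, Submodule.span_le]
    rintro v hv
    simp only [Set.mem_insert_iff, Set.mem_singleton_iff] at hv
    rcases hv with rfl | rfl | rfl
    · exact Submodule.mem_span_singleton_self _
    · exact hyx
    · exact hzx
  · exact Submodule.span_mono (Set.singleton_subset_iff.mpr (Set.mem_insert _ _))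

lemma w_mem_U (a' b' c' : k) : D.w a' b' c' ∈ D.U a' b' c' :=
  Submodule.subset_span (Set.mem_insert _ _)
lemma yx_mem_U (a' b' c' : k) : D.y * D.x ∈ D.U a' b' c' :=
  Submodule.subset_span (by simp)
lemma zx_mem_U (a' b' c' : k) : D.z * D.x ∈ D.U a' b' c' :=
  Submodule.subset_span (by simp)

lemma ker_eq (a b c a' b' c' : k) (habc : ¬ (a = 0 ∧ b = 0 ∧ c = 0))
    (h1 : b' * a - a' * (q * b) = 0) (h2 : a' * c + c' * (a + b) = 0)
    (hmem : ∀ c1 c2 c3 : k, c2 * a = q * b * c1 → c1 * c + c3 * (a + b) = 0 →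
      c1 • D.x + c2 • D.y + c3 • D.z ∈ D.U a' b' c') :
    LinearMap.ker (LinearMap.toSpanSingleton Λ Λ (D.w a b c)) = D.U a' b' c' := by
  apply le_antisymm
  · intro lam hlam
    rw [LinearMap.mem_ker, LinearMap.toSpanSingleton_apply, smul_eq_mul] at hlam
    obtain ⟨c1, c2, c3, c4, c5, hsum, e1, e2⟩ := D.exists_coeffs a b c habc lam hlam
    rw [hsum]
    exact add_mem (add_mem (hmem c1 c2 c3 e1 e2)
      (Submodule.smul_of_tower_mem _ _ (D.yx_mem_U a' b' c')))
      (Submodule.smul_of_tower_mem _ _ (D.zx_mem_U a' b' c'))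
  · rw [U, Submodule.span_le]
    rintro v hv
    simp only [Set.mem_insert_iff, Set.mem_singleton_iff] at hv
    rw [SetLike.mem_coe, LinearMap.mem_ker, LinearMap.toSpanSingleton_apply, smul_eq_mul]
    rcases hv with rfl | rfl | rfl
    · rw [D.w_mul_w, h1, h2, zero_smul, zero_smul, add_zero]
    · exact D.yx_mul_w a b c
    · exact D.zx_mul_w a b c

end LambdaAlg

/-- (1) If `a ≠ 0` and `a+b ≠ 0` then `U(a,b,c) ≅ M(ω(a,b,c))` where
`ω(a,b,c) = (a, qb, −(a/(a+b))c)`; (2) if `a ≠ 0`, `a+b = 0`, `c ≠ 0` then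
`U(a,b,c) ≅ M(0,0,1)`; (3) if `a = 0` and `b ≠ 0` then `U(a,b,c) ≅ M(0,1,0)`. -/


theorem statement8 (k : Type) [Field k] (q : k) (hq : q ≠ 0)
    (Λ : Type) [Ring Λ] [Algebra k Λ] (D : LambdaAlg k q Λ)
    (a b c : k) (h : (a, b, c) ≠ (0, 0, 0)) :
    (a ≠ 0 → a + b ≠ 0 →
      Nonempty (↥(D.U a b c) ≃ₗ[Λ] D.M a (q * b) (-(a / (a + b)) * c)))
    ∧ (a ≠ 0 → a + b = 0 → c ≠ 0 → Nonempty (↥(D.U a b c) ≃ₗ[Λ] D.M 0 0 1))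
    ∧ (a = 0 → b ≠ 0 → Nonempty (↥(D.U a b c) ≃ₗ[Λ] D.M 0 1 0)) := by
  have habc : ¬ (a = 0 ∧ b = 0 ∧ c = 0) := by simpa [Prod.ext_iff] using h
  refine ⟨?_, ?_, ?_⟩
  · intro ha hab
    refine ⟨D.isoOf a b c a (q*b) (-(a/(a+b))*c) ?_ ?_⟩
    · exact D.U_eq_span a b c (D.yx_mem_span a b c ha) (D.zx_mem_span_of_ab a b c hab)
    · refine D.ker_eq a b c a (q*b) (-(a/(a+b))*c) habc (by ring) (by field_simp; ring) ?_
      intro c1 c2 c3 e1 e2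
      have hx : c1 • D.x + c2 • D.y + c3 • D.z
          = (c1/a) • D.w a (q*b) (-(a/(a+b))*c) := by
        rw [LambdaAlg.w, smul_add, smul_add, smul_smul, smul_smul, smul_smul]
        have hc2 : c2 = c1 / a * (q * b) := by field_simp; linear_combination e1
        have hc3 : c3 = c1 / a * (-(a / (a + b)) * c) := by
          field_simp
          linear_combination e2
        rw [div_mul_cancel₀ _ ha, ← hc2, ← hc3]
      rw [hx]
      exact Submodule.smul_of_tower_mem _ _ (D.w_mem_U a (q*b) (-(a/(a+b))*c) )
  · intro ha hab hc
    refine ⟨D.isoOf a b c 0 0 1 ?_ ?_⟩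
    · exact D.U_eq_span a b c (D.yx_mem_span a b c ha)
        (D.zx_mem_span_of_c a b c hc (D.yx_mem_span a b c ha))
    · refine D.ker_eq a b c 0 0 1 habc (by ring) (by rw [hab]; ring) ?_
      intro c1 c2 c3 e1 e2
      have hc1 : c1 = 0 := by
        rw [hab, mul_zero, add_zero] at e2
        exact (mul_eq_zero.mp e2).resolve_right hc
      have hc2 : c2 = 0 := by
        rw [hc1, mul_zero] at e1
        exact (mul_eq_zero.mp e1).resolve_right ha
      have hx : c1 • D.x + c2 • D.y + c3 • D.z = c3 • D.w 0 0 1 := by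
        rw [LambdaAlg.w, hc1, hc2]
        simp
      rw [hx]
      exact Submodule.smul_of_tower_mem _ _ (D.w_mem_U 0 0 1)
  · intro ha hb
    refine ⟨D.isoOf a b c 0 1 0 ?_ ?_⟩
    · have hzx := D.zx_mem_span_of_ab a b c (by rw [ha, zero_add]; exact hb)
      exact D.U_eq_span a b c
        (D.yx_mem_span_of_qb a b c (mul_ne_zero hq hb) hzx) hzx
    · refine D.ker_eq a b c 0 1 0 habc (by rw [ha]; ring) (by ring) ?_
      intro c1 c2 c3 e1 e2
      have hc1 : c1 = 0 := by
        rw [ha, mul_zero] at e1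
        rcases mul_eq_zero.mp e1.symm with h' | h'
        · exact absurd (mul_eq_zero.mp h') (by push_neg; exact ⟨hq, hb⟩)
        · exact h'
      have hc3 : c3 = 0 := by
        rw [hc1, zero_mul, zero_add, ha, zero_add] at e2
        exact (mul_eq_zero.mp e2).resolve_right hb
      have hx : c1 • D.x + c2 • D.y + c3 • D.z = c2 • D.w 0 1 0 := by
        rw [LambdaAlg.w, hc1, hc3]
        simp
      rw [hx]
      exact Submodule.smul_of_tower_mem _ _ (D.w_mem_U 0 1 0)
end

section
/- Let R be a ring and w ∈ R. If every homomorphism of left R-modules Rw → R maps w into the right ideal wR, then Hom_R(Rw, R) is isomorphic to wR as right R-modules (where Hom_R(Rw, R) carries the right R-module structure given by (f·r)(v) = f(v)·r). -/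
open CategoryTheory Limits Opposite

/-- If every left `R`-linear map `Rw → R` sends `w` into `wR`, then
`Hom_R(Rw, R) ≅ wR` as right `R`-modules. -/
theorem statement17 (R : Type) [Ring R] (w : R)
    (h : ∀ f : ↥(Submodule.span R {w}) →ₗ[R] R,
      f ⟨w, Submodule.mem_span_singleton_self w⟩ ∈ Submodule.span Rᵐᵒᵖ {w}) :
    Nonempty ((↥(Submodule.span R {w}) →ₗ[R] R) ≃ₗ[Rᵐᵒᵖ]
      ↥(Submodule.span Rᵐᵒᵖ {w})) := by
  refine ⟨LinearEquiv.ofBijective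
    { toFun := fun f => ⟨f ⟨w, Submodule.mem_span_singleton_self w⟩, h f⟩
      map_add' := fun f g => rfl
      map_smul' := fun c f => rfl } ⟨?_, ?_⟩⟩
  · intro f g hfg
    have hfg' : f ⟨w, Submodule.mem_span_singleton_self w⟩
        = g ⟨w, Submodule.mem_span_singleton_self w⟩ := congrArg Subtype.val hfg
    ext ⟨v, hv⟩
    obtain ⟨r, rfl⟩ := Submodule.mem_span_singleton.mp hv
    have hveq : (⟨r • w, hv⟩ : ↥(Submodule.span R {w}))
        = r • ⟨w, Submodule.mem_span_singleton_self w⟩ := rfl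
    simp only [hveq, map_smul, hfg']
  · rintro ⟨v, hv⟩
    obtain ⟨r, rfl⟩ := Submodule.mem_span_singleton.mp hv
    refine ⟨{ toFun := fun v => v.1 * r.unop
              map_add' := fun a b => add_mul _ _ _
              map_smul' := fun s v => by simp [mul_assoc] }, ?_⟩
    ext
    simp [MulOpposite.smul_eq_mul_unop]
end
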